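/- Let V and W be finite-dimensional real inner product spaces with dim V = dim W = d ≥ 1. Let A : V → V and B : W → W be symmetric (self-adjoint) linear maps, and let L : W → V be a linear bijection such that ⟪B w, w⟫ = ⟪A (L w), L w⟫ for every w ∈ W, and such that there exist real numbers 0 ≤ α ≤ β with α ⟪w, w⟫ ≤ ⟪L w, L w⟫ ≤ β ⟪w, w⟫ for every w ∈ W. Then both A and B have d real eigenvalues (counted with multiplicity), and for every k ∈ {1, …, d} the k-th largest eigenvalue of B is sandwiched between α·λ_k(A) and β·λ_k(A), i.e. min(α λ_k(A), β λ_k(A)) ≤ λ_k(B) ≤ max(α λ_k(A), β λ_k(A)), where λ_k denotes the k-th largest eigenvalue. -/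

import Mathlib

open Module

/-- The `k`-th largest eigenvalue of a symmetric endomorphism of a finite-dimensional real
inner ℝ product space, characterized via the Courant–Fischer max-min principle:
`λ_k(T) = max over k-dimensional subspaces C of min over nonzero u ∈ C of ⟪T u, u⟫ / ⟪u, u⟫`. -/
noncomputable def lambdaK {E : Type*} [NormedAddCommGroup E] [InnerProductSpace ℝ E]
    (T : E →ₗ[ℝ] E) (k : ℕ) : ℝ :=
  ⨆ C : {C : Submodule ℝ E // Module.finrank ℝ C = k},
    ⨅ u : {u : E // u ∈ C.1 ∧ u ≠ 0},
      (inner ℝ (T u.1) u.1 : ℝ) / (inner ℝ u.1 u.1 : ℝ)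

lemma beta_eps_aux {β ε : ℝ} (hβ : 0 ≤ β) (hε : 0 < ε) : β * (ε / (β + 1)) ≤ ε := by
  rw [mul_comm, div_mul_eq_mul_div, div_le_iff₀ (by linarith : (0:ℝ) < β + 1)]
  nlinarith

section Aux

variable {E : Type*} [NormedAddCommGroup E] [InnerProductSpace ℝ E] [FiniteDimensional ℝ E]

/-- The Rayleigh quotient is bounded in absolute value by the operator norm. -/
lemma rq_abs_le (T : E →ₗ[ℝ] E) {u : E} (hu : u ≠ 0) :
    |(inner ℝ (T u) u : ℝ) / (inner ℝ u u : ℝ)| ≤ ‖LinearMap.toContinuousLinearMap T‖ := by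
  have hn : 0 < ‖u‖ := norm_pos_iff.mpr hu
  have h1 : (inner ℝ u u : ℝ) = ‖u‖ * ‖u‖ := real_inner_self_eq_norm_mul_norm u
  have h4 : (0:ℝ) < inner ℝ u u := by rw [h1]; positivity
  have h2 : |(inner ℝ (T u) u : ℝ)| ≤ ‖T u‖ * ‖u‖ := abs_real_inner_le_norm _ _
  have h3 : ‖T u‖ ≤ ‖LinearMap.toContinuousLinearMap T‖ * ‖u‖ :=
    (LinearMap.toContinuousLinearMap T).le_opNorm u
  rw [abs_div, abs_of_pos h4, div_le_iff₀ h4]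
  calc |(inner ℝ (T u) u : ℝ)| ≤ ‖T u‖ * ‖u‖ := h2
    _ ≤ (‖LinearMap.toContinuousLinearMap T‖ * ‖u‖) * ‖u‖ := by nlinarith
    _ = ‖LinearMap.toContinuousLinearMap T‖ * (inner ℝ u u : ℝ) := by rw [h1]; ring

lemma exists_submodule_finrank {d k : ℕ} (hE : finrank ℝ E = d) (hkd : k ≤ d) :
    ∃ C : Submodule ℝ E, finrank ℝ C = k := by
  have hle : k ≤ finrank ℝ E := hE ▸ hkd
  let b := finBasisOfFinrankEq ℝ E hE
  refine ⟨Submodule.span ℝ (Set.range (b ∘ Fin.castLE hkd)), ?_⟩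
  rw [finrank_span_eq_card (b.linearIndependent.comp _ (Fin.castLE_injective hkd))]
  simp

lemma exists_ne_zero_mem {C : Submodule ℝ E} {k : ℕ} (hk : 1 ≤ k) (hC : finrank ℝ C = k) :
    ∃ u : E, u ∈ C ∧ u ≠ 0 := by
  have : C ≠ ⊥ := by
    intro h
    rw [h, finrank_bot] at hC
    omega
  exact Submodule.exists_mem_ne_zero_of_ne_bot this

/-- The inf over nonzero elements of a `k`-dimensional subspace of the Rayleigh quotient
lies in `[-N, N]` where `N` is the operator norm. -/
lemma inf_rq_bounds (T : E →ₗ[ℝ] E) {C : Submodule ℝ E} {k : ℕ} (hk : 1 ≤ k)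
    (hC : finrank ℝ C = k) :
    BddBelow (Set.range fun u : {u : E // u ∈ C ∧ u ≠ 0} =>
      (inner ℝ (T u.1) u.1 : ℝ) / (inner ℝ u.1 u.1 : ℝ)) ∧
    Nonempty {u : E // u ∈ C ∧ u ≠ 0} ∧
    -‖LinearMap.toContinuousLinearMap T‖ ≤
      (⨅ u : {u : E // u ∈ C ∧ u ≠ 0}, (inner ℝ (T u.1) u.1 : ℝ) / (inner ℝ u.1 u.1 : ℝ)) ∧
    (⨅ u : {u : E // u ∈ C ∧ u ≠ 0}, (inner ℝ (T u.1) u.1 : ℝ) / (inner ℝ u.1 u.1 : ℝ)) ≤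
      ‖LinearMap.toContinuousLinearMap T‖ := by
  obtain ⟨u₀, hu₀⟩ := exists_ne_zero_mem hk hC
  have hne : Nonempty {u : E // u ∈ C ∧ u ≠ 0} := ⟨⟨u₀, hu₀⟩⟩
  have hbdd : BddBelow (Set.range fun u : {u : E // u ∈ C ∧ u ≠ 0} =>
      (inner ℝ (T u.1) u.1 : ℝ) / (inner ℝ u.1 u.1 : ℝ)) := by
    refine ⟨-‖LinearMap.toContinuousLinearMap T‖, ?_⟩
    rintro x ⟨u, rfl⟩
    exact neg_le_of_abs_le (rq_abs_le T u.2.2)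
  refine ⟨hbdd, hne, ?_, ?_⟩
  · exact le_ciInf fun u => neg_le_of_abs_le (rq_abs_le T u.2.2)
  · exact le_trans (ciInf_le hbdd ⟨u₀, hu₀⟩) (le_of_abs_le (rq_abs_le T hu₀.2))

lemma lambdaK_bddAbove (T : E →ₗ[ℝ] E) {k : ℕ} (hk : 1 ≤ k) :
    BddAbove (Set.range fun C : {C : Submodule ℝ E // finrank ℝ C = k} =>
      ⨅ u : {u : E // u ∈ C.1 ∧ u ≠ 0}, (inner ℝ (T u.1) u.1 : ℝ) / (inner ℝ u.1 u.1 : ℝ)) := by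
  refine ⟨‖LinearMap.toContinuousLinearMap T‖, ?_⟩
  rintro x ⟨C, rfl⟩
  exact (inf_rq_bounds T hk C.2).2.2.2

lemma inf_le_lambdaK (T : E →ₗ[ℝ] E) {k : ℕ} (hk : 1 ≤ k)
    (C : Submodule ℝ E) (hC : finrank ℝ C = k) :
    (⨅ u : {u : E // u ∈ C ∧ u ≠ 0}, (inner ℝ (T u.1) u.1 : ℝ) / (inner ℝ u.1 u.1 : ℝ)) ≤
      lambdaK T k :=
  le_ciSup (lambdaK_bddAbove T hk) (⟨C, hC⟩ : {C : Submodule ℝ E // finrank ℝ C = k})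

lemma lambdaK_le (T : E →ₗ[ℝ] E) {k : ℕ} [Nonempty {C : Submodule ℝ E // finrank ℝ C = k}]
    {x : ℝ} (h : ∀ C : {C : Submodule ℝ E // finrank ℝ C = k},
      (⨅ u : {u : E // u ∈ C.1 ∧ u ≠ 0},
        (inner ℝ (T u.1) u.1 : ℝ) / (inner ℝ u.1 u.1 : ℝ)) ≤ x) :
    lambdaK T k ≤ x :=
  ciSup_le h

lemma exists_lt_of_lt_lambdaK (T : E →ₗ[ℝ] E) {k : ℕ}
    [Nonempty {C : Submodule ℝ E // finrank ℝ C = k}] {a : ℝ} (ha : a < lambdaK T k) :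
    ∃ C : {C : Submodule ℝ E // finrank ℝ C = k},
      a < ⨅ u : {u : E // u ∈ C.1 ∧ u ≠ 0},
        (inner ℝ (T u.1) u.1 : ℝ) / (inner ℝ u.1 u.1 : ℝ) :=
  exists_lt_of_lt_ciSup ha

end Aux

/-- Sandwich inequalities for the spectra of two symmetric linear maps related by a bijection
`L` satisfying `⟪B w, w⟫ = ⟪A (L w), L w⟫` and `α ⟪w, w⟫ ≤ ⟪L w, L w⟫ ≤ β ⟪w, w⟫`.
Both `A` and `B` have `d` real eigenvalues (counted with multiplicity), and the `k`-th largest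
eigenvalue of `B` is sandwiched between `α·λ_k(A)` and `β·λ_k(A)`. -/
theorem stmt0 {V W : Type*}
    [NormedAddCommGroup V] [InnerProductSpace ℝ V] [FiniteDimensional ℝ V]
    [NormedAddCommGroup W] [InnerProductSpace ℝ W] [FiniteDimensional ℝ W]
    {d : ℕ} (hd : 1 ≤ d)
    (hV : Module.finrank ℝ V = d) (hW : Module.finrank ℝ W = d)
    (A : V →ₗ[ℝ] V) (B : W →ₗ[ℝ] W)
    (hA : A.IsSymmetric) (hB : B.IsSymmetric)
    (L : W ≃ₗ[ℝ] V)
    (hBL : ∀ w : W, (inner ℝ (B w) w : ℝ) = (inner ℝ (A (L w)) (L w) : ℝ))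
    {α β : ℝ} (hα : 0 ≤ α) (hαβ : α ≤ β)
    (hL : ∀ w : W, α * (inner ℝ w w : ℝ) ≤ (inner ℝ (L w) (L w) : ℝ) ∧
      (inner ℝ (L w) (L w) : ℝ) ≤ β * (inner ℝ w w : ℝ)) :
    (∃ (b : OrthonormalBasis (Fin d) ℝ V) (μ : Fin d → ℝ), ∀ i, A (b i) = μ i • b i) ∧
    (∃ (b : OrthonormalBasis (Fin d) ℝ W) (μ : Fin d → ℝ), ∀ i, B (b i) = μ i • b i) ∧
    ∀ k : ℕ, 1 ≤ k → k ≤ d →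
      min (α * lambdaK A k) (β * lambdaK A k) ≤ lambdaK B k ∧
        lambdaK B k ≤ max (α * lambdaK A k) (β * lambdaK A k) := by
  have hβ : 0 ≤ β := le_trans hα hαβ
  refine ⟨⟨hA.eigenvectorBasis hV, hA.eigenvalues hV,
      fun i => by simpa using hA.apply_eigenvectorBasis hV i⟩,
    ⟨hB.eigenvectorBasis hW, hB.eigenvalues hW,
      fun i => by simpa using hB.apply_eigenvectorBasis hW i⟩, ?_⟩
  intro k hk hkd
  -- pointwise sandwich :  g(r) ≤ R_B(u) ≤ f(r)  with  r = R_A (L u)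
  have key : ∀ u : W, u ≠ 0 →
      min (α * ((inner ℝ (A (L u)) (L u) : ℝ) / (inner ℝ (L u) (L u) : ℝ)))
        (β * ((inner ℝ (A (L u)) (L u) : ℝ) / (inner ℝ (L u) (L u) : ℝ)))
        ≤ (inner ℝ (B u) u : ℝ) / (inner ℝ u u : ℝ) ∧
      (inner ℝ (B u) u : ℝ) / (inner ℝ u u : ℝ) ≤
      max (α * ((inner ℝ (A (L u)) (L u) : ℝ) / (inner ℝ (L u) (L u) : ℝ)))
        (β * ((inner ℝ (A (L u)) (L u) : ℝ) / (inner ℝ (L u) (L u) : ℝ))) := by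
    intro u hu
    have hLu : L u ≠ 0 := by simp [hu]
    have hs : (0:ℝ) < inner ℝ u u := by
      rw [real_inner_self_eq_norm_mul_norm u]
      have := norm_pos_iff.mpr hu
      exact mul_pos this this
    have ht : (0:ℝ) < inner ℝ (L u) (L u) := by
      rw [real_inner_self_eq_norm_mul_norm (L u)]
      have := norm_pos_iff.mpr hLu
      exact mul_pos this this
    set s : ℝ := inner ℝ u u
    set t : ℝ := inner ℝ (L u) (L u)
    set r : ℝ := (inner ℝ (A (L u)) (L u) : ℝ) / t
    have hB' : (inner ℝ (B u) u : ℝ) / s = r * (t / s) := by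
      rw [hBL u]
      field_simp [r]
      exact (div_mul_cancel₀ _ ht.ne').symm
    have h1 : α * s ≤ t := (hL u).1
    have h2 : t ≤ β * s := (hL u).2
    have hts1 : α ≤ t / s := (le_div_iff₀ hs).mpr (by linarith [mul_comm α s])
    have hts2 : t / s ≤ β := (div_le_iff₀ hs).mpr (by linarith [mul_comm β s])
    rw [hB']
    rcases le_or_gt 0 r with hr | hr
    · constructor
      · exact le_trans (min_le_left _ _) (by nlinarith)
      · exact le_trans (by nlinarith) (le_max_right _ _)
    · constructor
      · exact le_trans (min_le_right _ _) (by nlinarith)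
      · exact le_trans (by nlinarith) (le_max_left _ _)
  -- nonemptiness of the index types for the sups
  obtain ⟨CW₀, hCW₀⟩ := exists_submodule_finrank (E := W) hW hkd
  obtain ⟨CV₀, hCV₀⟩ := exists_submodule_finrank (E := V) hV hkd
  haveI hneW : Nonempty {C : Submodule ℝ W // finrank ℝ C = k} := ⟨⟨CW₀, hCW₀⟩⟩
  haveI hneV : Nonempty {C : Submodule ℝ V // finrank ℝ C = k} := ⟨⟨CV₀, hCV₀⟩⟩
  set lA := lambdaK A k with hlA
  -- monotonicity helpers
  have fmono : ∀ x y : ℝ, x ≤ y → max (α * x) (β * x) ≤ max (α * y) (β * y) := by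
    intro x y hxy
    exact max_le (le_trans (by nlinarith) (le_max_left _ _))
      (le_trans (by nlinarith) (le_max_right _ _))
  have gmono : ∀ x y : ℝ, x ≤ y → min (α * x) (β * x) ≤ min (α * y) (β * y) := by
    intro x y hxy
    exact le_min (le_trans (min_le_left _ _) (by nlinarith))
      (le_trans (min_le_right _ _) (by nlinarith))
  have flip : ∀ x ε : ℝ, 0 ≤ ε → max (α * (x + ε)) (β * (x + ε)) ≤ max (α * x) (β * x) + β * ε := by
    intro x ε hε
    refine max_le ?_ ?_
    · have : α * x ≤ max (α * x) (β * x) := le_max_left _ _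
      nlinarith
    · have : β * x ≤ max (α * x) (β * x) := le_max_right _ _
      nlinarith
  have glip : ∀ x ε : ℝ, 0 ≤ ε → min (α * x) (β * x) - β * ε ≤ min (α * (x - ε)) (β * (x - ε)) := by
    intro x ε hε
    refine le_min ?_ ?_
    · have : min (α * x) (β * x) ≤ α * x := min_le_left _ _
      nlinarith
    · have : min (α * x) (β * x) ≤ β * x := min_le_right _ _
      nlinarith
  constructor
  · -- lower bound : g (lA) ≤ lambdaK B k
    refine le_of_forall_pos_le_add ?_
    intro ε hε
    set ε₀ : ℝ := ε / (β + 1) with hε₀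
    have hε₀pos : 0 < ε₀ := div_pos hε (by linarith)
    -- choose C' ⊆ V with inf > lA - ε₀
    have hlt : lA - ε₀ < lambdaK A k := by rw [← hlA]; linarith
    obtain ⟨C', hC'⟩ := exists_lt_of_lt_lambdaK A hlt
    -- pull back
    set C : Submodule ℝ W := C'.1.comap (L : W →ₗ[ℝ] V) with hC
    have hCrank : finrank ℝ C = k := by
      rw [hC, Submodule.comap_equiv_eq_map_symm, LinearEquiv.finrank_map_eq]
      exact C'.2
    have hmem : ∀ u : W, u ∈ C ∧ u ≠ 0 → L u ∈ C'.1 ∧ L u ≠ 0 := by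
      rintro u ⟨h1, h2⟩
      exact ⟨h1, by simp [h2]⟩
    obtain ⟨hbddV, hneV', hV1, hV2⟩ := inf_rq_bounds A hk C'.2
    have hinf : ∀ u : W, u ∈ C ∧ u ≠ 0 →
        lA - ε₀ ≤ (inner ℝ (A (L u)) (L u) : ℝ) / (inner ℝ (L u) (L u) : ℝ) := by
      intro u hu
      refine le_trans (le_of_lt hC') (ciInf_le hbddV ⟨L u, hmem u hu⟩)
    -- lambdaK B k ≥ inf over C of R_B ≥ g(lA - ε₀) ≥ g(lA) - β ε₀
    have hBge : min (α * (lA - ε₀)) (β * (lA - ε₀)) ≤ lambdaK B k := by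
      refine le_trans ?_ (inf_le_lambdaK B hk C hCrank)
      obtain ⟨u₀, hu₀⟩ := exists_ne_zero_mem hk hCrank
      have : Nonempty {u : W // u ∈ C ∧ u ≠ 0} := ⟨⟨u₀, hu₀⟩⟩
      refine le_ciInf fun u => ?_
      refine le_trans ?_ (key u.1 u.2.2).1
      exact gmono _ _ (hinf u.1 u.2)
    have hglip := glip lA ε₀ (le_of_lt hε₀pos)
    have hβε : β * ε₀ ≤ ε := by
      rw [hε₀]; exact beta_eps_aux hβ hε
    linarith only [hBge, hglip, hβε]
  · -- upper bound : lambdaK B k ≤ f (lA)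
    refine lambdaK_le B fun C => ?_
    -- push forward
    set C' : Submodule ℝ V := C.1.map (L : W →ₗ[ℝ] V) with hC'
    have hC'rank : finrank ℝ C' = k := by
      rw [hC', LinearEquiv.finrank_map_eq]; exact C.2
    obtain ⟨hbddW, hneW', _, _⟩ := inf_rq_bounds B hk C.2
    refine le_of_forall_pos_le_add ?_
    intro ε hε
    set ε₀ : ℝ := ε / (β + 1) with hε₀
    have hε₀pos : 0 < ε₀ := div_pos hε (by linarith)
    obtain ⟨hbddV, hneV', _, _⟩ := inf_rq_bounds A hk hC'rank
    set m : ℝ := ⨅ u : {u : V // u ∈ C' ∧ u ≠ 0},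
      (inner ℝ (A u.1) u.1 : ℝ) / (inner ℝ u.1 u.1 : ℝ) with hm
    have hmlt : m < m + ε₀ := by linarith
    obtain ⟨v, hv⟩ := exists_lt_of_ciInf_lt hmlt
    -- v ∈ C', pull it back
    obtain ⟨u, huC, huv⟩ := Submodule.mem_map.mp v.2.1
    have hune : u ≠ 0 := by
      intro h
      apply v.2.2
      rw [← huv, h]; simp
    have step1 : (⨅ u : {u : W // u ∈ C.1 ∧ u ≠ 0},
        (inner ℝ (B u.1) u.1 : ℝ) / (inner ℝ u.1 u.1 : ℝ)) ≤
        (inner ℝ (B u) u : ℝ) / (inner ℝ u u : ℝ) := ciInf_le hbddW ⟨u, huC, hune⟩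
    have step2 : (inner ℝ (B u) u : ℝ) / (inner ℝ u u : ℝ) ≤
        max (α * (m + ε₀)) (β * (m + ε₀)) := by
      refine le_trans (key u hune).2 ?_
      refine fmono _ _ ?_
      have : (L : W →ₗ[ℝ] V) u = v.1 := huv
      rw [show L u = v.1 from huv]
      exact le_of_lt hv
    have step3 : max (α * (m + ε₀)) (β * (m + ε₀)) ≤ max (α * m) (β * m) + β * ε₀ :=
      flip m ε₀ (le_of_lt hε₀pos)
    have step4 : max (α * m) (β * m) ≤ max (α * lA) (β * lA) := by
      refine fmono _ _ ?_
      rw [hm, hlA]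
      exact inf_le_lambdaK A hk C' hC'rank
    have hβε : β * ε₀ ≤ ε := by
      rw [hε₀]; exact beta_eps_aux hβ hε
    linarith only [step1, step2, step3, step4, hβε]
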